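/- Let G be a finite group with a central subgroup C of order 2 such that G/C is abelian, and suppose the commutator pairing (x,y) ↦ [x,y] descends to a nondegenerate bilinear pairing (G/C) × (G/C) → C. Then, up to isomorphism, G has a unique irreducible complex representation on which C acts nontrivially (i.e., the nonidentity element of C acts by −1), and its dimension squared equals the index [G : C]. -/

import Mathlib

open CategoryTheory
open scoped commutatorElement

section Helpers
variable {G : Type} [Group G]

/-- Restriction of an `FDRep` to an invariant submodule. -/
noncomputable def subRep (V : FDRep ℂ G) (W : Submodule ℂ V)
    (h : ∀ g : G, ∀ v ∈ W, V.ρ g v ∈ W) : FDRep ℂ G :=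
  FDRep.of
    { toFun := fun g => (V.ρ g).restrict (fun v hv => h g v hv)
      map_one' := by ext v; simp [LinearMap.restrict_apply]
      map_mul' := fun g h' => by
        ext v; simp [LinearMap.restrict_apply, Module.End.mul_apply] }

@[simp] lemma subRep_ρ (V : FDRep ℂ G) (W : Submodule ℂ V)
    (h : ∀ g : G, ∀ v ∈ W, V.ρ g v ∈ W) (g : G) (v : W) :
    (subRep V W h).ρ g v = ⟨V.ρ g (v : V), h g v v.2⟩ := rfl

/-- The inclusion morphism from a subrepresentation. -/
noncomputable def subRepι (V : FDRep ℂ G) (W : Submodule ℂ V)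
    (h : ∀ g : G, ∀ v ∈ W, V.ρ g v ∈ W) : subRep V W h ⟶ V where
  hom := FGModuleCat.ofHom W.subtype
  comm := fun g => by ext v; rfl

lemma fhom_comm {Y V : FDRep ℂ G} (f : Y ⟶ V) (g : G) (y : Y) :
    f.hom (Y.ρ g y) = V.ρ g (f.hom y) :=
  congrArg (fun φ => φ.hom.hom y) (f.comm g)

lemma simple_of_pred (V : FDRep ℂ G) (h1 : 0 < Module.finrank ℂ V)
    (h2 : ∀ W : Submodule ℂ V, (∀ g : G, ∀ v ∈ W, V.ρ g v ∈ W) → W = ⊥ ∨ W = ⊤) :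
    Simple V := by
  have hnt : Nontrivial V := Module.nontrivial_of_finrank_pos h1
  constructor
  intro Y f hm
  constructor
  · intro hiso h0
    obtain ⟨v, hv⟩ := exists_ne (0 : V)
    have hf0 : f.hom = 0 := by rw [h0, Action.zero_hom]
    have h : inv f ≫ f = 𝟙 V := IsIso.inv_hom_id f
    have h2' := congr_arg Action.Hom.hom h
    rw [Action.comp_hom, Action.id_hom, hf0, Limits.comp_zero] at h2'
    exact hv (by calc v = (𝟙 V.V : V.V ⟶ V.V) v := rfl
                _ = (0 : V.V ⟶ V.V) v := by rw [← h2']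
                _ = 0 := rfl)
  · intro hne
    set R : Submodule ℂ V := LinearMap.range f.hom.hom.hom with hR
    have hinv : ∀ g : G, ∀ v ∈ R, V.ρ g v ∈ R := by
      rintro g v ⟨y, rfl⟩
      exact ⟨Y.ρ g y, fhom_comm f g y⟩
    rcases h2 R hinv with hbot | htop
    · exact absurd (Action.hom_ext f 0 (by
        rw [Action.zero_hom]; exact FGModuleCat.hom_ext (LinearMap.range_eq_bot.mp hbot))) hne
    · have surj : Function.Surjective f.hom := LinearMap.range_eq_top.mp htop
      set K : Submodule ℂ Y := LinearMap.ker f.hom.hom.hom with hK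
      have hKinv : ∀ g : G, ∀ v ∈ K, Y.ρ g v ∈ K := by
        intro g v hv
        have : f.hom (Y.ρ g v) = 0 := by
          rw [fhom_comm f g v]
          exact (congrArg (V.ρ g) (LinearMap.mem_ker.mp hv)).trans (map_zero _)
        exact LinearMap.mem_ker.mpr this
      have hcomp : subRepι Y K hKinv ≫ f = (0 : subRep Y K hKinv ⟶ Y) ≫ f := by
        apply Action.hom_ext
        rw [Action.comp_hom, Action.comp_hom, Action.zero_hom]
        ext v
        show f.hom v.val = f.hom 0
        rw [map_zero]
        exact LinearMap.mem_ker.mp v.2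
      have hι : subRepι Y K hKinv = 0 := (cancel_mono f).mp hcomp
      have hKbot : K = ⊥ := by
        rw [Submodule.eq_bot_iff]
        intro x hx
        have h3 : (subRepι Y K hKinv).hom (⟨x, hx⟩ : K) = x := rfl
        rw [hι, Action.zero_hom] at h3
        exact h3.symm
      have inj : Function.Injective f.hom := LinearMap.ker_eq_bot.mp hKbot
      let e : Y ≃ₗ[ℂ] V := LinearEquiv.ofBijective f.hom.hom.hom ⟨inj, surj⟩
      refine ⟨⟨⟨FGModuleCat.ofHom e.symm.toLinearMap, fun g => ?_⟩, ?_, ?_⟩⟩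
      · ext v
        apply inj
        show f.hom (e.symm (V.ρ g v)) = f.hom (Y.ρ g (e.symm v))
        rw [fhom_comm f g]
        have he : ∀ x : V, f.hom (e.symm x) = x := fun x => e.apply_symm_apply x
        rw [he, he]
      · apply Action.hom_ext
        rw [Action.comp_hom, Action.id_hom]
        ext y
        exact e.symm_apply_apply y
      · apply Action.hom_ext
        rw [Action.comp_hom, Action.id_hom]
        ext v
        exact e.apply_symm_apply v

lemma char_mul_neg (A : FDRep ℂ G) {c : G} (hA : ∀ v : A, A.ρ c v = -v) (g : G) :
    A.character (c * g) = - A.character g := by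
  have hc : A.ρ c = -LinearMap.id := LinearMap.ext fun v => hA v
  simp only [FDRep.character, map_mul, hc]
  rw [Module.End.mul_eq_comp, LinearMap.neg_comp, LinearMap.id_comp, map_neg]

/-- The space of functions `f : G → ℂ` with `f (c * g) = - f g`. -/
noncomputable def Fsub (c : G) : Submodule ℂ (G → ℂ) where
  carrier := {f | ∀ g, f (c * g) = - f g}
  add_mem' := fun {a b} ha hb g => by simp only [Pi.add_apply, ha g, hb g]; ring
  zero_mem' := fun g => by simp
  smul_mem' := fun r f hf g => by simp only [Pi.smul_apply, hf g, smul_neg]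

/-- Right translation representation on `Fsub c`. -/
noncomputable def rho₀ (c : G) : Representation ℂ G ↥(Fsub c) where
  toFun g :=
    { toFun := fun f => ⟨fun x => f.1 (x * g), fun x => by
        simpa [mul_assoc] using f.2 (x * g)⟩
      map_add' := fun a b => Subtype.ext (funext fun x => rfl)
      map_smul' := fun r a => Subtype.ext (funext fun x => rfl) }
  map_one' := LinearMap.ext fun f => Subtype.ext (funext fun x => by simp)
  map_mul' := fun g h => LinearMap.ext fun f => Subtype.ext (funext fun x => by
    show f.1 (x * (g * h)) = f.1 (x * g * h)
    rw [mul_assoc])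

noncomputable def V₀ [Fintype G] (c : G) : FDRep ℂ G := FDRep.of (rho₀ c)

lemma V₀_c [Fintype G] {c : G} (hcen : ∀ x : G, c * x = x * c) (v : V₀ c) :
    (V₀ c).ρ c v = -v := by
  apply Subtype.ext
  funext x
  show v.1 (x * c) = (-v : ↥(Fsub c)).1 x
  rw [← hcen x]
  exact v.2 x

lemma V₀_exists_ne_zero [Fintype G] {c : G} (hc1 : c ≠ 1) (hcc : c * c = 1) :
    ∃ v : V₀ c, v ≠ 0 := by
  classical
  have hcinv : c⁻¹ = c := inv_eq_of_mul_eq_one_right hcc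
  refine ⟨⟨fun x => if x = 1 then 1 else if x = c then -1 else 0, fun g => ?_⟩, fun h => ?_⟩
  · by_cases h1 : g = 1
    · subst h1; simp [hc1]
    · by_cases h2 : g = c
      · subst h2; simp [hcc, hc1, Ne.symm hc1]
      · have hna : c * g ≠ 1 := fun h => h2 (by rw [← hcinv, eq_inv_of_mul_eq_one_right h])
        have hnb : c * g ≠ c := fun h => h1 (by
          have := mul_left_cancel (a := c) (h.trans (mul_one c).symm); exact this)
        simp [h1, h2, hna, hnb]
  · have := congrFun (congrArg Subtype.val h) 1
    simp at this
    exact one_ne_zero this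

end Helpers

/-- Stone–von Neumann type uniqueness: if `G` is finite with a central subgroup
`C` of order 2 such that `G/C` is abelian and the commutator pairing on `G/C`
is nondegenerate, then `G` has a unique irreducible complex representation on
which the nonidentity element of `C` acts by `−1`, and its dimension squared
equals `[G : C]`. -/
theorem stmt_12 (G : Type) [Group G] [Finite G]
    (C : Subgroup G) (hC : C ≤ Subgroup.center G) (hC2 : Nat.card C = 2)
    (hab : ∀ x y : G, ⁅x, y⁆ ∈ C)
    (hnd : ∀ x : G, x ∉ C → ∃ y : G, ⁅x, y⁆ ≠ 1) :
    ∃ V : FDRep ℂ G,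
      (0 < Module.finrank ℂ ↥V ∧
        (∀ W : Submodule ℂ ↥V, (∀ g : G, ∀ v ∈ W, V.ρ g v ∈ W) → W = ⊥ ∨ W = ⊤) ∧
        (∀ c ∈ C, c ≠ 1 → ∀ v : ↥V, V.ρ c v = -v)) ∧
      Module.finrank ℂ ↥V * Module.finrank ℂ ↥V = C.index ∧
      ∀ V' : FDRep ℂ G,
        (0 < Module.finrank ℂ ↥V' ∧
          (∀ W : Submodule ℂ ↥V', (∀ g : G, ∀ v ∈ W, V'.ρ g v ∈ W) → W = ⊥ ∨ W = ⊤) ∧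
          (∀ c ∈ C, c ≠ 1 → ∀ v : ↥V', V'.ρ c v = -v)) →
        Nonempty (V ≅ V') := by
  letI : Fintype G := Fintype.ofFinite G
  -- extract the nonidentity central element c of C
  obtain ⟨cc, hcc1, hcuniq⟩ := (Nat.card_eq_two_iff' (1 : C)).mp hC2
  set c : G := (cc : G) with hcdef
  have hcC : c ∈ C := cc.2
  have hc1 : c ≠ 1 := fun h => hcc1 (Subtype.ext h)
  have hdich : ∀ x ∈ C, x = 1 ∨ x = c := by
    intro x hx
    by_cases h : (⟨x, hx⟩ : C) = 1
    · exact Or.inl (congrArg Subtype.val h)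
    · exact Or.inr (congrArg Subtype.val (hcuniq ⟨x, hx⟩ h))
  have hcc : c * c = 1 := by
    rcases hdich (c * c) (C.mul_mem hcC hcC) with h | h
    · exact h
    · exact absurd (mul_right_cancel (b := c) (h.trans (one_mul c).symm)) hc1
  have hcinv : c⁻¹ = c := inv_eq_of_mul_eq_one_right hcc
  have hcen : ∀ x : G, c * x = x * c := fun x =>
    ((Subgroup.mem_center_iff.mp (hC hcC)) x).symm
  -- the ambient representation
  have hnt : Nontrivial (V₀ (G := G) c) := by
    obtain ⟨v, hv⟩ := V₀_exists_ne_zero (G := G) hc1 hcc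
    exact nontrivial_of_ne v 0 hv
  -- minimal invariant submodule
  let SS : Set ℕ := {n | ∃ p : Submodule ℂ (V₀ (G := G) c), p ≠ ⊥ ∧
      (∀ g : G, ∀ v ∈ p, (V₀ c).ρ g v ∈ p) ∧ Module.finrank ℂ p = n}
  have hSS : SS.Nonempty :=
    ⟨_, ⊤, Ne.symm bot_ne_top, fun g v _ => Submodule.mem_top, rfl⟩
  obtain ⟨U, hUne, hUinv, hUrank⟩ := Nat.sInf_mem hSS
  have hUmin : ∀ q : Submodule ℂ (V₀ (G := G) c), q ≠ ⊥ →
      (∀ g : G, ∀ v ∈ q, (V₀ c).ρ g v ∈ q) → q ≤ U → q = U := by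
    intro q hq hqinv hle
    refine Submodule.eq_of_le_of_finrank_le hle ?_
    rw [hUrank]
    exact Nat.sInf_le ⟨q, hq, hqinv, rfl⟩
  set VV : FDRep ℂ G := subRep (V₀ c) U hUinv with hVV
  have hnontrU : Nontrivial ↥U := Submodule.nontrivial_iff_ne_bot.mpr hUne
  have hrankpos : 0 < Module.finrank ℂ VV := by
    haveI : Nontrivial ↥VV := hnontrU
    exact Module.finrank_pos
  have hirr : ∀ W : Submodule ℂ ↥VV, (∀ g : G, ∀ v ∈ W, VV.ρ g v ∈ W) → W = ⊥ ∨ W = ⊤ := by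
    intro W hW
    by_cases hWb : W = ⊥
    · exact Or.inl hWb
    right
    have hmap_inv : ∀ g : G, ∀ v ∈ W.map U.subtype, (V₀ c).ρ g v ∈ W.map U.subtype := by
      intro g v hv
      obtain ⟨w, hw, hwv⟩ := Submodule.mem_map.mp hv
      subst hwv
      exact Submodule.mem_map.mpr ⟨VV.ρ g w, hW g w hw, rfl⟩
    have hmapne : W.map U.subtype ≠ ⊥ := by
      obtain ⟨w, hw, hw0⟩ := (Submodule.ne_bot_iff W).mp hWb
      let w' : ↥U := w
      refine (Submodule.ne_bot_iff _).mpr ⟨(w' : V₀ c), Submodule.mem_map.mpr ⟨w, hw, rfl⟩, ?_⟩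
      intro h0
      exact hw0 (Submodule.coe_eq_zero.mp h0)
    have hmeq : W.map U.subtype = U := hUmin _ hmapne hmap_inv (Submodule.map_subtype_le U W)
    rw [Submodule.eq_top_iff']
    intro u
    let u' : ↥U := u
    have hu : (u' : V₀ c) ∈ W.map U.subtype := by rw [hmeq]; exact u'.2
    obtain ⟨w, hw, hwu⟩ := Submodule.mem_map.mp hu
    have hwe : w = u' := Subtype.ext hwu
    exact (hwe ▸ hw : u' ∈ W)
  have hcneg : ∀ c' ∈ C, c' ≠ 1 → ∀ v : ↥VV, VV.ρ c' v = -v := by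
    intro c' hc' hne v
    have hc'c : c' = c := (hdich c' hc').resolve_left hne
    subst hc'c
    exact Subtype.ext (V₀_c hcen (U.subtype v))
  haveI sV : Simple VV := simple_of_pred VV hrankpos hirr
  letI hInv : Invertible ((Fintype.card G : ℂ)) :=
    invertibleOfNonzero (Nat.cast_ne_zero.mpr Fintype.card_ne_zero)
  have hcardne : ((Fintype.card G : ℂ)) ≠ 0 := Nat.cast_ne_zero.mpr Fintype.card_ne_zero
  have main : ∀ (A B : FDRep ℂ G), Simple A → Simple B →
      0 < Module.finrank ℂ A → 0 < Module.finrank ℂ B →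
      (∀ c' ∈ C, c' ≠ 1 → ∀ v : A, A.ρ c' v = -v) →
      (∀ c' ∈ C, c' ≠ 1 → ∀ v : B, B.ρ c' v = -v) →
      Nonempty (A ≅ B) ∧
        2 * (Module.finrank ℂ A : ℂ) * (Module.finrank ℂ B : ℂ) = (Fintype.card G : ℂ) := by
    intro A B sA sB hposA hposB hA hB
    classical
    have hAneg : ∀ v : A, A.ρ c v = -v := hA c hcC hc1
    have hBneg : ∀ v : B, B.ρ c v = -v := hB c hcC hc1
    have hAzero : ∀ g : G, g ∉ C → A.character g = 0 := by
      intro g hg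
      obtain ⟨y, hy⟩ := hnd g hg
      have hcy : ⁅g, y⁆ = c := (hdich _ (hab g y)).resolve_left hy
      have h1 : ⁅y, g⁆ = c := by
        rw [(commutatorElement_inv g y).symm.trans (congrArg Inv.inv hcy), hcinv]
      have h2 : y * g * y⁻¹ = c * g := by
        rw [commutatorElement_def] at h1
        exact mul_inv_eq_iff_eq_mul.mp h1
      have h3 : A.character g = - A.character g := by
        conv_lhs => rw [← FDRep.char_conj A g y]
        rw [h2, char_mul_neg A hAneg g]
      have h4 : A.character g + A.character g = 0 := by linear_combination h3
      exact add_self_eq_zero.mp h4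
    set dA := (Module.finrank ℂ A : ℂ) with hdA
    set dB := (Module.finrank ℂ B : ℂ) with hdB
    have hAc : A.character c = -dA := by
      have h := char_mul_neg A hAneg 1
      rw [mul_one] at h
      rw [h, FDRep.char_one]
    have hBc : B.character c = -dB := by
      have h := char_mul_neg B hBneg 1
      rw [mul_one] at h
      rw [h, FDRep.char_one]
    have hpt : ∀ g : G, A.character g * B.character g⁻¹ =
        (if g = 1 then dA * dB else 0) + (if g = c then dA * dB else 0) := by
      intro g
      by_cases h1 : g = 1
      · subst h1
        rw [if_pos rfl, if_neg (Ne.symm hc1), inv_one, FDRep.char_one, FDRep.char_one, add_zero]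
      · by_cases h2 : g = c
        · subst h2
          rw [if_neg h1, if_pos rfl, hcinv, hAc, hBc]
          ring
        · have hg : g ∉ C := fun hgC => (hdich g hgC).elim h1 h2
          rw [hAzero g hg, zero_mul, if_neg h1, if_neg h2, add_zero]
    have hsum : ∑ g : G, A.character g * B.character g⁻¹ = 2 * dA * dB := by
      rw [Finset.sum_congr rfl (fun g _ => hpt g), Finset.sum_add_distrib,
        Finset.sum_ite_eq' Finset.univ (1 : G) (fun _ => dA * dB),
        Finset.sum_ite_eq' Finset.univ c (fun _ => dA * dB),
        if_pos (Finset.mem_univ _), if_pos (Finset.mem_univ _)]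
      ring
    haveI := sA
    haveI := sB
    have horth : (Fintype.card G : ℂ)⁻¹ * ∑ g : G, A.character g * B.character g⁻¹ =
        if Nonempty (A ≅ B) then (1 : ℂ) else (0 : ℂ) :=
      by rw [← Nat.card_eq_fintype_card]; exact FDRep.char_orthonormal A B
    rw [hsum] at horth
    by_cases hiso : Nonempty (A ≅ B)
    · refine ⟨hiso, ?_⟩
      rw [if_pos hiso] at horth
      field_simp at horth
      linear_combination horth
    · exfalso
      rw [if_neg hiso] at horth
      have hdA0 : dA ≠ 0 := Nat.cast_ne_zero.mpr hposA.ne'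
      have hdB0 : dB ≠ 0 := Nat.cast_ne_zero.mpr hposB.ne'
      rcases mul_eq_zero.mp horth with h | h
      · exact hcardne (inv_eq_zero.mp h)
      · rcases mul_eq_zero.mp h with h' | h'
        · rcases mul_eq_zero.mp h' with h'' | h''
          · norm_num at h''
          · exact hdA0 h''
        · exact hdB0 h' 
  refine ⟨VV, ⟨hrankpos, hirr, hcneg⟩, ?_, ?_⟩
  · obtain ⟨-, hdim⟩ := main VV VV sV sV hrankpos hrankpos hcneg hcneg
    have hcard : (Fintype.card G : ℕ) = 2 * C.index := by
      rw [← Nat.card_eq_fintype_card, ← C.card_mul_index, hC2]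
    have hc2 : ((Fintype.card G : ℕ) : ℂ) = 2 * (C.index : ℂ) := by
      exact_mod_cast congrArg (Nat.cast (R := ℂ)) hcard
    have hℂ : ((2 * (Module.finrank ℂ VV * Module.finrank ℂ VV) : ℕ) : ℂ) =
        ((2 * C.index : ℕ) : ℂ) := by
      push_cast
      linear_combination hdim + hc2
    have hℕ := Nat.cast_injective (R := ℂ) hℂ
    omega
  · rintro V' ⟨h1', h2', h3'⟩
    haveI sV' : Simple V' := simple_of_pred V' h1' h2'
    exact (main VV V' sV sV' hrankpos h1' hcneg h3').1
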